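/- Let (v, a) be a product two-action game with m players and let π be a permutation of {1,…,m} with F(π) ≠ ∅. Then the number of elements of EC(π) that are Nash equilibria is either 0 or 2^{|F(π)|−1}. -/

import Mathlib

open Finset
open scoped Classical

/-- `λ^i(γ) = (−1)^{v_i} · ∏_{j ≠ i} (γ_j − a^i_j)` for a product two-action game. -/
def lamP {m : ℕ} (v : Fin m → ℕ) (a : Fin m → Fin m → ℝ) (i : Fin m) (γ : Fin m → ℝ) : ℝ :=
  (-1 : ℝ) ^ (v i) * ∏ j ∈ Finset.univ.erase i, (γ j - a i j)

/-- `γ ∈ [0,1]^m`. -/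
def InCube {m : ℕ} (γ : Fin m → ℝ) : Prop := ∀ i, 0 ≤ γ i ∧ γ i ≤ 1

/-- Equilibrium candidate: `λ^i(γ) = 0` for every `i` with `0 < γ_i < 1`. -/
def IsEqCand {m : ℕ} (v : Fin m → ℕ) (a : Fin m → Fin m → ℝ) (γ : Fin m → ℝ) : Prop :=
  InCube γ ∧ ∀ i, 0 < γ i → γ i < 1 → lamP v a i γ = 0

/-- Nash equilibrium of the product two-action game. -/
def IsNashP {m : ℕ} (v : Fin m → ℕ) (a : Fin m → Fin m → ℝ) (γ : Fin m → ℝ) : Prop :=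
  IsEqCand v a γ ∧ (∀ i, γ i = 0 → lamP v a i γ ≤ 0) ∧ (∀ i, γ i = 1 → 0 ≤ lamP v a i γ)

/-- The coefficient conditions of a product two-action game:
`a^i_j ∈ (0,1)` and `a^{i₁}_j ≠ a^{i₂}_j` for distinct `i₁, i₂ ≠ j`. -/
def GoodCoef {m : ℕ} (a : Fin m → Fin m → ℝ) : Prop :=
  (∀ i j : Fin m, i ≠ j → 0 < a i j ∧ a i j < 1) ∧
  (∀ j i₁ i₂ : Fin m, i₁ ≠ j → i₂ ≠ j → i₁ ≠ i₂ → a i₁ j ≠ a i₂ j)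

/-- `EC(π)`. -/
def ECset {m : ℕ} (a : Fin m → Fin m → ℝ) (π : Equiv.Perm (Fin m)) : Set (Fin m → ℝ) :=
  {γ | InCube γ ∧ (∀ i, π i = i → (γ i = 0 ∨ γ i = 1)) ∧ (∀ j, π j ≠ j → γ j = a (π j) j)}

/-- `|F(π)|`, the number of fixed points of `π`. -/
def fixedCard {m : ℕ} (π : Equiv.Perm (Fin m)) : ℕ :=
  (Finset.univ.filter fun i => π i = i).card

/-- `V(m) = Σ_{l=0}^m binom(m,l)·2^l·!(m−l)`. -/
def Vnum (m : ℕ) : ℕ :=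
  ∑ l ∈ Finset.range (m + 1), Nat.choose m l * 2 ^ l * numDerangements (m - l)

/-- `σj` is the `j`-th associated permutation: it fixes `j` and sorts the
`a^i_j` (`i ≠ j`) decreasingly. -/
def IsAssoc {m : ℕ} (a : Fin m → Fin m → ℝ) (j : Fin m) (σj : Equiv.Perm (Fin m)) : Prop :=
  σj j = j ∧ ∀ i₁ i₂ : Fin m, i₁ ≠ j → i₂ ≠ j → i₁ ≠ i₂ → (σj i₁ < σj i₂ ↔ a i₂ j < a i₁ j)

/-- The increment `Inc(γ,i)` of an equilibrium candidate `γ ∈ EC(π)` at `i ∈ F(π)`. -/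
noncomputable def IncMap {m : ℕ} (v : Fin m → ℕ) (σ : Fin m → Equiv.Perm (Fin m))
    (π : Equiv.Perm (Fin m)) (γ : Fin m → ℝ) (i : Fin m) : ℕ :=
  (1 + (if γ i = 1 then 1 else 0) + v i
    + (Finset.univ.filter fun k => π k = k ∧ k ≠ i ∧ γ k = 0).card
    + ∑ j ∈ Finset.univ.filter (fun j => π j ≠ j),
        (if (σ j) i ≤ (σ j) (π j) then 1 else 0)) % 2

/-- `g(π)`: the equilibrium candidate in `EC(π)` with `γ_i = 1` for all `i ∈ F(π)`. -/
noncomputable def gP {m : ℕ} (a : Fin m → Fin m → ℝ) (π : Equiv.Perm (Fin m)) : Fin m → ℝ :=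
  fun j => if π j = j then 1 else a (π j) j

/-- A product two-action game is maximal if for every permutation `π` with
`F(π) ≠ ∅` exactly `2^{|F(π)|−1}` elements of `EC(π)` are Nash equilibria. -/
def IsMaximal {m : ℕ} (v : Fin m → ℕ) (a : Fin m → Fin m → ℝ) : Prop :=
  ∀ π : Equiv.Perm (Fin m), (∃ i, π i = i) →
    {γ ∈ ECset a π | IsNashP v a γ}.ncard = 2 ^ (fixedCard π - 1)

/-- `χ(a,b) = 1` iff `a ≥ b` (on naturals). -/
def chiN (x y : ℕ) : ℕ := if y ≤ x then 1 else 0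

/-- The permutation `δ^i` of `{1,…,m}`. -/
def deltaFun (m i j : ℕ) : ℕ :=
  if j = i then i
  else if j < i then m - i + j + chiN (m - i + j) i
  else j - i + chiN (j - i) i

section Aux
variable {m : ℕ}

/-- Fixed point set -/
def Fset (π : Equiv.Perm (Fin m)) : Finset (Fin m) := Finset.univ.filter fun i => π i = i

def gamOf (a : Fin m → Fin m → ℝ) (π : Equiv.Perm (Fin m)) (S : Finset (Fin m)) :
    Fin m → ℝ :=
  fun i => if π i = i then (if i ∈ S then (1:ℝ) else 0) else a (π i) i

noncomputable def Dcoef (v : Fin m → ℕ) (a : Fin m → Fin m → ℝ) (π : Equiv.Perm (Fin m))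
    (i : Fin m) : ℝ :=
  (-1 : ℝ) ^ (v i) * ∏ j ∈ Finset.univ.filter (fun j => ¬ π j = j), (a (π j) j - a i j)

def eS (S : Finset (Fin m)) (j : Fin m) : ℝ := if j ∈ S then 1 else -1

variable (v : Fin m → ℕ) (a : Fin m → Fin m → ℝ) (π : Equiv.Perm (Fin m))

lemma gamOf_mem_EC (ha : GoodCoef a) (S : Finset (Fin m)) :
    gamOf a π S ∈ ECset a π := by
  refine ⟨?_, ?_, ?_⟩
  · intro i
    by_cases h : π i = i
    · by_cases hS : i ∈ S <;> simp [gamOf, h, hS]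
    · have hlt := ha.1 (π i) i h
      constructor
      · show (0:ℝ) ≤ gamOf a π S i
        simp only [gamOf, if_neg h]
        exact hlt.1.le
      · show gamOf a π S i ≤ 1
        simp only [gamOf, if_neg h]
        exact hlt.2.le
  · intro i h
    by_cases hS : i ∈ S <;> simp [gamOf, h, hS]
  · intro j h
    simp [gamOf, h]

lemma EC_eq_gamOf (γ : Fin m → ℝ) (hγ : γ ∈ ECset a π) :
    γ = gamOf a π (Finset.univ.filter fun i => π i = i ∧ γ i = 1) := by
  funext i
  by_cases h : π i = i
  · rcases hγ.2.1 i h with h0 | h1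
    · have : ¬ (π i = i ∧ γ i = 1) := by rw [h0]; simp
      simp [gamOf, h, this, h0]
    · simp [gamOf, h, h1]
  · simp [gamOf, h, hγ.2.2 i h]

lemma gamOf_injOn (S₁ S₂ : Finset (Fin m)) (h₁ : S₁ ⊆ Fset π) (h₂ : S₂ ⊆ Fset π)
    (h : gamOf a π S₁ = gamOf a π S₂) : S₁ = S₂ := by
  ext i
  constructor <;> intro hi
  · have hπ : π i = i := by have := h₁ hi; simpa [Fset] using this
    have := congrFun h i
    simp only [gamOf, hπ, if_true, hi] at this
    by_contra hc
    rw [if_neg hc] at this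
    norm_num at this
  · have hπ : π i = i := by have := h₂ hi; simpa [Fset] using this
    have := congrFun h i
    simp only [gamOf, hπ, if_true, hi] at this
    by_contra hc
    rw [if_neg hc] at this
    norm_num at this

lemma gamOf_eqCand (ha : GoodCoef a) (S : Finset (Fin m)) :
    IsEqCand v a (gamOf a π S) := by
  refine ⟨(gamOf_mem_EC a π ha S).1, ?_⟩
  intro i h0 h1
  have hπ : ¬ π i = i := by
    intro hc
    by_cases hS : i ∈ S <;> simp [gamOf, hc, hS] at h0 h1
  set j := π.symm i with hj
  have hji : π j = i := π.apply_symm_apply i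
  have hjne : j ≠ i := by
    intro hc
    exact hπ (by rw [← hc] at hji ⊢; exact hji)
  have hjnf : ¬ π j = j := by
    intro hc
    exact hjne (by rw [hc] at hji; exact hji)
  have hmem : j ∈ Finset.univ.erase i := by simp [hjne]
  have hz : gamOf a π S j - a i j = 0 := by
    simp [gamOf, hjnf, hji, Ne.symm hjne]
  unfold lamP
  rw [Finset.prod_eq_zero hmem hz, mul_zero]

lemma Dcoef_ne (ha : GoodCoef a) (i : Fin m) (hi : π i = i) :
    Dcoef v a π i ≠ 0 := by
  unfold Dcoef
  apply mul_ne_zero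
  · exact pow_ne_zero _ (by norm_num)
  · apply Finset.prod_ne_zero_iff.mpr
    intro j hj
    simp only [mem_filter, mem_univ, true_and] at hj
    have hij : i ≠ j := fun hc => hj (by rw [← hc]; exact hi)
    have hπji : π j ≠ i := by
      intro hc
      have hji2 : j = i := π.injective (by rw [hc, hi])
      exact hj (by rw [hji2, hi])
    exact sub_ne_zero.mpr (ha.2 j (π j) i hj hij hπji)

end Aux

section Aux2
variable {m : ℕ} (v : Fin m → ℕ) (a : Fin m → Fin m → ℝ) (π : Equiv.Perm (Fin m))

lemma pos_cancel {T x : ℝ} (hT : 0 < T) (h : 0 < T * x) : 0 < x := by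
  rcases mul_pos_iff.mp h with ⟨_, hx⟩ | ⟨hT', _⟩
  · exact hx
  · linarith

lemma lam_formula (i : Fin m) (hi : π i = i) (S : Finset (Fin m)) :
    lamP v a i (gamOf a π S) =
      (∏ j ∈ (Fset π).erase i, (gamOf a π S j - a i j)) * Dcoef v a π i := by
  unfold lamP Dcoef
  rw [← Finset.prod_filter_mul_prod_filter_not (Finset.univ.erase i) (fun j => π j = j)]
  have h1 : (Finset.univ.erase i).filter (fun j => π j = j) = (Fset π).erase i := by
    ext x; simp [Fset]
  have h2 : (Finset.univ.erase i).filter (fun j => ¬ π j = j)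
      = Finset.univ.filter (fun j => ¬ π j = j) := by
    ext x
    simp only [mem_filter, mem_erase, mem_univ, true_and, and_true]
    constructor
    · exact fun h => h.2
    · intro h
      refine ⟨fun hc => h ?_, h⟩
      rw [hc]; exact hi
  have h3 : ∏ j ∈ Finset.univ.filter (fun j => ¬ π j = j), (gamOf a π S j - a i j)
      = ∏ j ∈ Finset.univ.filter (fun j => ¬ π j = j), (a (π j) j - a i j) := by
    apply Finset.prod_congr rfl
    intro j hj
    simp only [mem_filter] at hj
    simp [gamOf, hj.2]
  rw [h1, h2, h3]; ring

lemma eS_prod (F S : Finset (Fin m)) :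
    ∏ j ∈ F, eS S j = (-1 : ℝ) ^ (F \ S).card := by
  rw [← Finset.prod_filter_mul_prod_filter_not F (fun j => j ∈ S) (eS S)]
  have h1 : ∏ j ∈ F.filter (fun j => j ∈ S), eS S j = 1 :=
    Finset.prod_eq_one (fun j hj => by simp [eS, (Finset.mem_filter.mp hj).2])
  have h2 : ∏ j ∈ F.filter (fun j => ¬ j ∈ S), eS S j = (-1 : ℝ) ^ (F \ S).card := by
    rw [Finset.sdiff_eq_filter]
    apply Finset.prod_eq_pow_card
    intro j hj
    simp [eS, (Finset.mem_filter.mp hj).2]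
  rw [h1, h2, one_mul]

lemma eS_ne (F S : Finset (Fin m)) : (∏ j ∈ F, eS S j) ≠ 0 := by
  rw [eS_prod]; exact pow_ne_zero _ (by norm_num)

lemma neg_one_pow_pos_iff (n : ℕ) : (0:ℝ) < (-1)^n ↔ Even n := by
  rcases Nat.even_or_odd n with h | h
  · simp [h.neg_one_pow, h]
  · rw [h.neg_one_pow]
    simp [Nat.not_even_iff_odd.mpr h]

lemma lam_decomp (ha : GoodCoef a) (S : Finset (Fin m)) (i : Fin m) (hi : π i = i) :
    ∃ T : ℝ, 0 < T ∧
      lamP v a i (gamOf a π S) =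
        T * ((∏ j ∈ (Fset π).erase i, eS S j) * Dcoef v a π i) := by
  refine ⟨∏ j ∈ (Fset π).erase i, (if j ∈ S then 1 - a i j else a i j), ?_, ?_⟩
  · apply Finset.prod_pos
    intro j hj
    have hij : i ≠ j := fun hc => (Finset.mem_erase.mp hj).1 hc.symm
    have hbo := ha.1 i j hij
    by_cases hjS : j ∈ S <;> simp only [hjS, if_true, if_false]
    · linarith [hbo.2]
    · exact hbo.1
  · rw [lam_formula v a π i hi S]
    have h4 : ∏ j ∈ (Fset π).erase i, (gamOf a π S j - a i j)
        = ∏ j ∈ (Fset π).erase i, ((if j ∈ S then 1 - a i j else a i j) * eS S j) := by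
      apply Finset.prod_congr rfl
      intro j hj
      have hjf : π j = j := by
        have := (Finset.mem_erase.mp hj).2
        simpa [Fset] using this
      by_cases hjS : j ∈ S <;> simp [gamOf, hjf, hjS, eS]
    rw [h4, Finset.prod_mul_distrib]; ring

lemma nash_char (ha : GoodCoef a) (S : Finset (Fin m)) (hS : S ⊆ Fset π) :
    IsNashP v a (gamOf a π S) ↔
      ∀ i ∈ Fset π, 0 < (∏ j ∈ Fset π, eS S j) * Dcoef v a π i := by
  have hEE' : ∀ i ∈ Fset π,
      eS S i * ∏ j ∈ (Fset π).erase i, eS S j = ∏ j ∈ Fset π, eS S j :=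
    fun i hi => Finset.mul_prod_erase _ _ hi
  have hlamne : ∀ i ∈ Fset π, lamP v a i (gamOf a π S) ≠ 0 := by
    intro i hi
    have hπi : π i = i := by simpa [Fset] using hi
    obtain ⟨T, hT, hlam⟩ := lam_decomp v a π ha S i hπi
    rw [hlam]
    exact mul_ne_zero hT.ne' (mul_ne_zero (eS_ne _ _) (Dcoef_ne v a π ha i hπi))
  constructor
  · intro hN i hi
    have hπi : π i = i := by simpa [Fset] using hi
    obtain ⟨T, hT, hlam⟩ := lam_decomp v a π ha S i hπi
    by_cases hiS : i ∈ S
    · have hγ : gamOf a π S i = 1 := by simp [gamOf, hπi, hiS]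
      have hle := hN.2.2 i hγ
      have hlt : 0 < lamP v a i (gamOf a π S) :=
        lt_of_le_of_ne hle (Ne.symm (hlamne i hi))
      have he : eS S i = 1 := by simp [eS, hiS]
      have : (∏ j ∈ Fset π, eS S j) * Dcoef v a π i
          = (∏ j ∈ (Fset π).erase i, eS S j) * Dcoef v a π i := by
        rw [← hEE' i hi, he, one_mul]
      rw [this]
      exact pos_cancel hT (by rw [← hlam]; exact hlt)
    · have hγ : gamOf a π S i = 0 := by simp [gamOf, hπi, hiS]
      have hle := hN.2.1 i hγ
      have hlt : lamP v a i (gamOf a π S) < 0 :=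
        lt_of_le_of_ne hle (hlamne i hi)
      have he : eS S i = -1 := by simp [eS, hiS]
      have hEeq : (∏ j ∈ Fset π, eS S j) * Dcoef v a π i
          = -((∏ j ∈ (Fset π).erase i, eS S j) * Dcoef v a π i) := by
        rw [← hEE' i hi, he]; ring
      rw [hEeq]
      apply pos_cancel hT
      rw [mul_neg, ← hlam]
      linarith
  · intro hall
    refine ⟨gamOf_eqCand v a π ha S, ?_, ?_⟩
    · intro i hγ
      have hπi : π i = i := by
        by_contra hc
        rw [show gamOf a π S i = a (π i) i by simp [gamOf, hc]] at hγ
        exact absurd hγ (ne_of_gt (ha.1 (π i) i hc).1)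
      have hi : i ∈ Fset π := by simp [Fset, hπi]
      have hiS : i ∉ S := by
        intro hc
        rw [show gamOf a π S i = 1 by simp [gamOf, hπi, hc]] at hγ
        norm_num at hγ
      obtain ⟨T, hT, hlam⟩ := lam_decomp v a π ha S i hπi
      have he : eS S i = -1 := by simp [eS, hiS]
      have hEeq : (∏ j ∈ (Fset π).erase i, eS S j)
          = -(∏ j ∈ Fset π, eS S j) := by
        rw [← hEE' i hi, he]; ring
      rw [hlam, hEeq]
      have := mul_pos hT (hall i hi)
      nlinarith
    · intro i hγ
      have hπi : π i = i := by
        by_contra hc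
        rw [show gamOf a π S i = a (π i) i by simp [gamOf, hc]] at hγ
        exact absurd hγ (ne_of_lt (ha.1 (π i) i hc).2)
      have hi : i ∈ Fset π := by simp [Fset, hπi]
      have hiS : i ∈ S := by
        by_contra hc
        rw [show gamOf a π S i = 0 by simp [gamOf, hπi, hc]] at hγ
        norm_num at hγ
      obtain ⟨T, hT, hlam⟩ := lam_decomp v a π ha S i hπi
      have he : eS S i = 1 := by simp [eS, hiS]
      have hEeq : (∏ j ∈ (Fset π).erase i, eS S j)
          = (∏ j ∈ Fset π, eS S j) := by
        rw [← hEE' i hi, he, one_mul]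
      rw [hlam, hEeq]
      have := mul_pos hT (hall i hi)
      nlinarith

end Aux2

theorem count_parity {α : Type*} [DecidableEq α] (F : Finset α) (hF : F.Nonempty) :
    (F.powerset.filter fun S => Even ((F \ S).card)).card = 2 ^ (F.card - 1) ∧
    (F.powerset.filter fun S => ¬ Even ((F \ S).card)).card = 2 ^ (F.card - 1) := by
  obtain ⟨i₀, hi₀⟩ := hF
  set t : Finset α → Finset α := fun S => if i₀ ∈ S then S.erase i₀ else insert i₀ S with ht
  have hsub : ∀ S, S ⊆ F → t S ⊆ F := by
    intro S hS
    by_cases h : i₀ ∈ S <;> simp only [t, h, if_true, if_false]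
    · exact (erase_subset _ _).trans hS
    · exact insert_subset hi₀ hS
  have hpar : ∀ S, S ⊆ F → (Even ((F \ t S).card) ↔ ¬ Even ((F \ S).card)) := by
    intro S hS
    by_cases h : i₀ ∈ S
    · have he : F \ t S = insert i₀ (F \ S) := by
        simp only [t, h, if_true]
        ext x
        simp only [mem_sdiff, mem_erase, mem_insert, not_and, not_not]
        by_cases hx : x = i₀ <;> simp [hx, hi₀, h]
      have hni : i₀ ∉ F \ S := by simp [h]
      rw [he, card_insert_of_notMem hni, Nat.even_add_one]
    · have he : F \ S = insert i₀ (F \ t S) := by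
        simp only [t, h, if_false]
        ext x
        simp only [mem_sdiff, mem_insert, not_or]
        by_cases hx : x = i₀ <;> simp [hx, hi₀, h]
      have hni : i₀ ∉ F \ t S := by simp [t, h]
      rw [he, card_insert_of_notMem hni, Nat.even_add_one]
      tauto
  have hinv : ∀ S : Finset α, t (t S) = S := by
    intro S
    by_cases h : i₀ ∈ S
    · simp [t, h, insert_erase h]
    · simp [t, h, erase_insert h]
  have hcardeq : (F.powerset.filter fun S => Even ((F \ S).card)).card
      = (F.powerset.filter fun S => ¬ Even ((F \ S).card)).card := by
    apply Finset.card_nbij' t t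
    · intro S hS
      simp only [Finset.mem_coe, mem_filter, mem_powerset] at *
      exact ⟨hsub S hS.1, by rw [hpar S hS.1]; exact fun hc => hc hS.2⟩
    · intro S hS
      simp only [Finset.mem_coe, mem_filter, mem_powerset] at *
      exact ⟨hsub S hS.1, by
        have := hpar S hS.1
        by_contra hc
        exact hS.2 (by tauto)⟩
    · intro S _; exact hinv S
    · intro S _; exact hinv S
  have hsum : (F.powerset.filter fun S => Even ((F \ S).card)).card
      + (F.powerset.filter fun S => ¬ Even ((F \ S).card)).card = 2 ^ F.card := by
    rw [card_filter_add_card_filter_not, card_powerset]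
  have hpos : 1 ≤ F.card := card_pos.mpr ⟨i₀, hi₀⟩
  have hp2 : 2 ^ F.card = 2 * 2 ^ (F.card - 1) := by
    conv_lhs => rw [show F.card = (F.card - 1) + 1 by omega]
    ring
  omega


/-- For `π` with `F(π) ≠ ∅`, the number of Nash equilibria in `EC(π)`
is either `0` or `2^{|F(π)|−1}`. -/
theorem stmt7 {m : ℕ} (hm : 1 ≤ m) (v : Fin m → ℕ) (hv : ∀ i, v i ≤ 1)
    (a : Fin m → Fin m → ℝ) (ha : GoodCoef a)
    (π : Equiv.Perm (Fin m)) (hF : ∃ i, π i = i) :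
    {γ ∈ ECset a π | IsNashP v a γ}.ncard = 0 ∨
    {γ ∈ ECset a π | IsNashP v a γ}.ncard = 2 ^ (fixedCard π - 1) := by
  obtain ⟨i₀, hi₀⟩ := hF
  have hi₀F : i₀ ∈ Fset π := by simp [Fset, hi₀]
  have hFne : (Fset π).Nonempty := ⟨i₀, hi₀F⟩
  have hFcard : fixedCard π = (Fset π).card := rfl
  have hset : {γ ∈ ECset a π | IsNashP v a γ}
      = ↑(((Fset π).powerset.filter fun S =>
          ∀ i ∈ Fset π, 0 < (∏ j ∈ Fset π, eS S j) * Dcoef v a π i).image (gamOf a π)) := by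
    ext γ
    simp only [Set.mem_setOf_eq, Finset.coe_image, Set.mem_image, Finset.mem_coe,
      Finset.mem_filter, Finset.mem_powerset]
    constructor
    · rintro ⟨hEC, hN⟩
      refine ⟨Finset.univ.filter fun i => π i = i ∧ γ i = 1, ⟨?_, ?_⟩, ?_⟩
      · intro x hx
        simp only [Finset.mem_filter, Finset.mem_univ, true_and] at hx
        simp [Fset, hx.1]
      · rw [← nash_char v a π ha _ (by
            intro x hx
            simp only [Finset.mem_filter, Finset.mem_univ, true_and] at hx
            simp [Fset, hx.1])]
        rw [← EC_eq_gamOf a π γ hEC]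
        exact hN
      · exact (EC_eq_gamOf a π γ hEC).symm
    · rintro ⟨S, ⟨hS, hNash⟩, rfl⟩
      exact ⟨gamOf_mem_EC a π ha S, (nash_char v a π ha S hS).mpr hNash⟩
  have hinj : Set.InjOn (gamOf a π)
      ↑((Fset π).powerset.filter fun S =>
          ∀ i ∈ Fset π, 0 < (∏ j ∈ Fset π, eS S j) * Dcoef v a π i) := by
    intro S₁ h₁ S₂ h₂ h
    simp only [Finset.coe_filter, Set.mem_setOf_eq, Finset.mem_powerset] at h₁ h₂
    exact gamOf_injOn a π S₁ S₂ h₁.1 h₂.1 h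
  rw [hset, Set.ncard_coe_finset, Finset.card_image_of_injOn hinj]
  by_cases hsame : ∀ i ∈ Fset π, (0 < Dcoef v a π i ↔ 0 < Dcoef v a π i₀)
  · right
    rw [hFcard]
    by_cases hD : 0 < Dcoef v a π i₀
    · have heq : ((Fset π).powerset.filter fun S =>
          ∀ i ∈ Fset π, 0 < (∏ j ∈ Fset π, eS S j) * Dcoef v a π i)
          = (Fset π).powerset.filter fun S => Even (((Fset π) \ S).card) := by
        apply Finset.filter_congr
        intro S _
        constructor
        · intro hall
          have h0 := hall i₀ hi₀F
          rw [eS_prod] at h0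
          rw [← neg_one_pow_pos_iff (((Fset π) \ S).card)]
          exact pos_cancel hD (by rw [mul_comm]; exact h0)
        · intro hev i hi
          have hDi : 0 < Dcoef v a π i := (hsame i hi).mpr hD
          rw [eS_prod]
          exact mul_pos ((neg_one_pow_pos_iff _).mpr hev) hDi
      rw [heq, (count_parity (Fset π) hFne).1]
    · have hDlt : Dcoef v a π i₀ < 0 :=
        lt_of_le_of_ne (not_lt.mp hD) (Dcoef_ne v a π ha i₀ hi₀)
      have heq : ((Fset π).powerset.filter fun S =>
          ∀ i ∈ Fset π, 0 < (∏ j ∈ Fset π, eS S j) * Dcoef v a π i)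
          = (Fset π).powerset.filter fun S => ¬ Even (((Fset π) \ S).card) := by
        apply Finset.filter_congr
        intro S _
        constructor
        · intro hall hev
          have h0 := hall i₀ hi₀F
          rw [eS_prod, hev.neg_one_pow, one_mul] at h0
          linarith
        · intro hodd i hi
          have hDi : Dcoef v a π i < 0 := by
            have h1 : ¬ 0 < Dcoef v a π i := fun hc => hD ((hsame i hi).mp hc)
            have h2 : π i = i := by simpa [Fset] using hi
            exact lt_of_le_of_ne (not_lt.mp h1) (Dcoef_ne v a π ha i h2)
          rw [eS_prod, (Nat.not_even_iff_odd.mp hodd).neg_one_pow]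
          nlinarith
      rw [heq, (count_parity (Fset π) hFne).2]
  · left
    rw [Finset.card_eq_zero, Finset.filter_eq_empty_iff]
    intro S _
    push_neg at hsame
    obtain ⟨i, hi, hne⟩ := hsame
    intro hall
    have h1 := hall i hi
    have h2 := hall i₀ hi₀F
    have h3 := mul_pos h1 h2
    have hEne := eS_ne (Fset π) S
    rcases hne with ⟨hp, hq⟩ | ⟨hp, hq⟩ <;>
      rcases lt_or_gt_of_ne hEne with hE | hE <;> nlinarith
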